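/- Let p be a prime and let m be a natural number with 1 ≤ m < p. Let T and T' be finite subsets of ZMod p with |T| = |T'| = m. If for every i with 1 ≤ i ≤ m one has Σ_{z ∈ T} z^i = Σ_{z ∈ T'} z^i in ZMod p, then T = T'. -/

import Mathlib

open Finset Polynomial

lemma newton_finset {R : Type*} [CommRing R] (T : Finset R) (k : ℕ) :
    (k : R) * T.val.esymm k = (-1) ^ (k + 1) *
      ∑ a ∈ Finset.HasAntidiagonal.antidiagonal k with a.1 < k,
        (-1) ^ a.1 * T.val.esymm a.1 * ∑ z ∈ T, z ^ a.2 := by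
  classical
  have h := congrArg (MvPolynomial.aeval (fun i : {x // x ∈ T} => (i : R)))
    (MvPolynomial.mul_esymm_eq_sum {x // x ∈ T} R k)
  simp only [map_mul, map_pow, map_neg, map_one, map_sum, map_natCast,
    MvPolynomial.aeval_esymm_eq_multiset_esymm, MvPolynomial.psum,
    MvPolynomial.aeval_X] at h
  have hval : (Finset.univ.val.map fun i : {x // x ∈ T} => (i : R)) = T.val := by
    rw [Finset.univ_eq_attach, Finset.attach_val]
    exact Multiset.attach_map_val T.val
  have hsum : ∀ n : ℕ, (∑ i : {x // x ∈ T}, (i : R) ^ n) = ∑ z ∈ T, z ^ n := fun n =>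
    T.sum_attach (fun z => z ^ n)
  rw [hval] at h
  simp_rw [hsum] at h
  exact h

theorem eq_of_power_sums_eq_zmod
    (p m : ℕ) (hp : p.Prime) (hm : 1 ≤ m) (hmp : m < p)
    (T T' : Finset (ZMod p)) (hT : T.card = m) (hT' : T'.card = m)
    (hsums : ∀ i, 1 ≤ i → i ≤ m → ∑ z ∈ T, z ^ i = ∑ z ∈ T', z ^ i) :
    T = T' := by
  haveI : Fact p.Prime := ⟨hp⟩
  -- esymm equal for all k ≤ m
  have hesymm : ∀ k, k ≤ m → T.val.esymm k = T'.val.esymm k := by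
    intro k
    induction k using Nat.strong_induction_on with
    | _ k ih =>
      intro hk
      rcases Nat.eq_zero_or_pos k with h0 | h0
      · simp [h0, Multiset.esymm]
      · have hknz : (k : ZMod p) ≠ 0 := by
          intro h
          rw [ZMod.natCast_eq_zero_iff] at h
          exact absurd (Nat.le_of_dvd h0 h) (Nat.not_le.mpr (lt_of_le_of_lt hk hmp))
        have h1 := newton_finset T k
        have h2 := newton_finset T' k
        have hsame : ∑ a ∈ Finset.HasAntidiagonal.antidiagonal k with a.1 < k,
            (-1 : ZMod p) ^ a.1 * T.val.esymm a.1 * ∑ z ∈ T, z ^ a.2 =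
            ∑ a ∈ Finset.HasAntidiagonal.antidiagonal k with a.1 < k,
            (-1 : ZMod p) ^ a.1 * T'.val.esymm a.1 * ∑ z ∈ T', z ^ a.2 := by
          apply Finset.sum_congr rfl
          intro a ha
          simp only [Finset.mem_filter, Finset.HasAntidiagonal.mem_antidiagonal] at ha
          have h1le : 1 ≤ a.2 := by omega
          have h2le : a.2 ≤ m := by omega
          rw [ih a.1 ha.2 (by omega), hsums a.2 h1le h2le]
        have : (k : ZMod p) * T.val.esymm k = (k : ZMod p) * T'.val.esymm k := by
          rw [h1, h2, hsame]
        exact mul_left_cancel₀ hknz this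
  -- polynomial equality
  have hpoly : (T.val.map fun t => X - C t).prod = (T'.val.map fun t => X - C t).prod := by
    rw [Multiset.prod_X_sub_X_eq_sum_esymm, Multiset.prod_X_sub_X_eq_sum_esymm]
    have hc : Multiset.card T.val = m := hT
    have hc' : Multiset.card T'.val = m := hT'
    rw [hc, hc']
    apply Finset.sum_congr rfl
    intro j hj
    rw [Finset.mem_range] at hj
    rw [hesymm j (by omega)]
  have := congrArg Polynomial.roots hpoly
  rw [Polynomial.roots_multiset_prod_X_sub_C, Polynomial.roots_multiset_prod_X_sub_C] at this
  exact Finset.val_inj.mp this
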